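/- Let r be a positive integer and let z (a function assigning a real z_α to each multi-index α ∈ ℕ^{[m]×[n]} with |α| ≤ 2r) satisfy z_0 = 1 and the localizing equalities M_{r−1}(r_i z) = 0, M_{r−1}(c_j z) = 0, M_{r−1}(r_{i₁} π_{i₂j} z) = 0, and M_{r−1}(c_{j₁} π_{ij₂} z) = 0 for all i,i₁,i₂ ∈ [m] and j,j₁,j₂ ∈ [n]. For each I ⊆ [m]×[n] with |I| ≤ 2r, let M̄_{r−d_I}(e_I z) denote the principal submatrix of M_{r−d_I}(e_I z) obtained by keeping only the rows and columns indexed by multi-indices of length exactly r−d_I. Then for every such I: M_{r−d_I}(e_I z) is positive semidefinite if and only if M̄_{r−d_I}(e_I z) is positive semidefinite. -/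

import Mathlib

open MvPolynomial

/-- The Riesz functional associated to a moment sequence `z`. -/
noncomputable def riesz {σ : Type*} (z : (σ →₀ ℕ) → ℝ) (p : MvPolynomial σ ℝ) : ℝ :=
  ∑ α ∈ p.support, MvPolynomial.coeff α p * z α

/-- The total degree (length) of a multi-index. -/
def mdeg {σ : Type*} (α : σ →₀ ℕ) : ℕ := α.sum fun _ e => e

/-- Positive semidefiniteness of the truncated localizing matrix `M_t(g z)`:
the associated quadratic form is nonnegative on coefficient vectors of
polynomials of degree at most `t`. -/
def locPSD {σ : Type*} (z : (σ →₀ ℕ) → ℝ) (g : MvPolynomial σ ℝ) (t : ℕ) : Prop :=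
  ∀ p : MvPolynomial σ ℝ, p.totalDegree ≤ t → 0 ≤ riesz z (g * p ^ 2)

/-- Vanishing of the truncated localizing matrix `M_t(g z)`: all entries are zero. -/
def locZero {σ : Type*} (z : (σ →₀ ℕ) → ℝ) (g : MvPolynomial σ ℝ) (t : ℕ) : Prop :=
  ∀ α β : σ →₀ ℕ, mdeg α ≤ t → mdeg β ≤ t →
    riesz z (g * monomial α 1 * monomial β 1) = 0

/-- The row-marginal polynomial `r_i(π) = ∑_j π_{ij} - μ_i`. -/
noncomputable def rowPoly (a b : ℕ) (μ : Fin a → ℝ) (i : Fin a) :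
    MvPolynomial (Fin a × Fin b) ℝ :=
  (∑ j, X (i, j)) - C (μ i)

/-- The column-marginal polynomial `c_j(π) = ∑_i π_{ij} - ν_j`. -/
noncomputable def colPoly (a b : ℕ) (ν : Fin b → ℝ) (j : Fin b) :
    MvPolynomial (Fin a × Fin b) ℝ :=
  (∑ i, X (i, j)) - C (ν j)

/-- The monomial `e_I = ∏_{(i,j) ∈ I} π_{ij}`. -/
noncomputable def eI {a b : ℕ} (I : Finset (Fin a × Fin b)) : MvPolynomial (Fin a × Fin b) ℝ :=
  ∏ q ∈ I, X q

/-- A probability vector: nonnegative entries summing to 1. -/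
def IsProbVec {a : ℕ} (μ : Fin a → ℝ) : Prop := (∀ i, 0 ≤ μ i) ∧ ∑ i, μ i = 1

/-- Feasibility for the level-`r` Schmüdgen moment relaxation (S-DGW-r). -/
def SFeas (a b r : ℕ) (μ : Fin a → ℝ) (ν : Fin b → ℝ)
    (z : ((Fin a × Fin b) →₀ ℕ) → ℝ) : Prop :=
  z 0 = 1 ∧
  (∀ I : Finset (Fin a × Fin b), I.card ≤ 2 * r → locPSD z (eI I) (r - (I.card + 1) / 2)) ∧
  (∀ i, locZero z (rowPoly a b μ i) (r - 1)) ∧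
  (∀ j, locZero z (colPoly a b ν j) (r - 1)) ∧
  (∀ i₁ i₂ : Fin a, ∀ j : Fin b, locZero z (rowPoly a b μ i₁ * X (i₂, j)) (r - 1)) ∧
  (∀ j₁ j₂ : Fin b, ∀ i : Fin a, locZero z (colPoly a b ν j₁ * X (i, j₂)) (r - 1))

/-- The objective of the Schmüdgen moment relaxation. -/
noncomputable def objS (a b : ℕ) (L : Fin a → Fin b → Fin a → Fin b → ℝ)
    (z : ((Fin a × Fin b) →₀ ℕ) → ℝ) : ℝ :=
  ∑ i, ∑ j, ∑ k, ∑ l, L i j k l * z (Finsupp.single (i, j) 1 + Finsupp.single (k, l) 1)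

/-- The optimal value of the level-`r` Schmüdgen moment relaxation. -/
noncomputable def valS (a b r : ℕ) (μ : Fin a → ℝ) (ν : Fin b → ℝ)
    (L : Fin a → Fin b → Fin a → Fin b → ℝ) : ℝ :=
  sInf {v : ℝ | ∃ z, SFeas a b r μ ν z ∧ v = objS a b L z}


section Aux

open Finset

variable {σ : Type*} (z : (σ →₀ ℕ) → ℝ)

lemma riesz_eq_sum' (p : MvPolynomial σ ℝ) : riesz z p = (AddMonoidAlgebra.coeff p).sum fun α c => c * z α := rfl

lemma riesz_add' (p q : MvPolynomial σ ℝ) : riesz z (p + q) = riesz z p + riesz z q := by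
  simp only [riesz_eq_sum', AddMonoidAlgebra.coeff_add]
  exact Finsupp.sum_add_index' (fun a => zero_mul _) (fun a b c => add_mul _ _ _)

lemma riesz_smul' (c : ℝ) (p : MvPolynomial σ ℝ) : riesz z (c • p) = c * riesz z p := by
  simp only [riesz_eq_sum', AddMonoidAlgebra.coeff_smul]
  rw [show (c • AddMonoidAlgebra.coeff p).sum (fun α b => b * z α) = (AddMonoidAlgebra.coeff p).sum (fun α b => c * b * z α) from
    Finsupp.sum_smul_index' (fun a => zero_mul _), Finsupp.mul_sum]
  simp [mul_assoc]

/-- The Riesz functional as a linear map. -/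
noncomputable def rieszLM : MvPolynomial σ ℝ →ₗ[ℝ] ℝ where
  toFun := riesz z
  map_add' := riesz_add' z
  map_smul' := riesz_smul' z

lemma riesz_sum' {ι : Type*} (s : Finset ι) (f : ι → MvPolynomial σ ℝ) :
    riesz z (∑ i ∈ s, f i) = ∑ i ∈ s, riesz z (f i) :=
  map_sum (rieszLM z) f s

lemma riesz_sub' (p q : MvPolynomial σ ℝ) : riesz z (p - q) = riesz z p - riesz z q :=
  map_sub (rieszLM z) p q

lemma mdeg_add' (α β : σ →₀ ℕ) : mdeg (α + β) = mdeg α + mdeg β :=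
  Finsupp.sum_add_index' (fun _ => rfl) (fun _ _ _ => rfl)

lemma mdeg_single' (q : σ) (k : ℕ) : mdeg (Finsupp.single q k) = k :=
  Finsupp.sum_single_index rfl

lemma exists_le_mdeg' (k : ℕ) : ∀ (α : σ →₀ ℕ), k ≤ mdeg α → ∃ β, β ≤ α ∧ mdeg β = k := by
  induction k with
  | zero => intro α _; exact ⟨0, zero_le, rfl⟩
  | succ k ih =>
    intro α hk
    obtain ⟨β, hβle, hβd⟩ := ih α (Nat.le_of_succ_le hk)
    have hne : β ≠ α := by rintro rfl; omega
    have : ∃ q, β q < α q := by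
      by_contra h
      push_neg at h
      exact hne (Finsupp.ext fun q => le_antisymm ((Finsupp.le_def).mp hβle q) (h q))
    obtain ⟨q, hq⟩ := this
    refine ⟨β + Finsupp.single q 1, ?_, by rw [mdeg_add', hβd, mdeg_single']⟩
    rw [Finsupp.le_def]
    intro x
    rcases eq_or_ne x q with rfl | hx
    · simpa using hq
    · rw [Finsupp.add_apply, Finsupp.single_eq_of_ne' (Ne.symm hx), add_zero]
      exact (Finsupp.le_def).mp hβle x

lemma split_two' (α : σ →₀ ℕ) (s : ℕ) (h : mdeg α ≤ 2 * s) :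
    ∃ β γ, α = β + γ ∧ mdeg β ≤ s ∧ mdeg γ ≤ s := by
  obtain ⟨β, hle, hd⟩ := exists_le_mdeg' (min (mdeg α) s) α (min_le_left _ _)
  have hsum : β + (α - β) = α := add_tsub_cancel_of_le hle
  have hdd : mdeg β + mdeg (α - β) = mdeg α := by rw [← mdeg_add', hsum]
  exact ⟨β, α - β, hsum.symm, by omega, by omega⟩

end Aux

section Main

variable {m n r : ℕ} {μ : Fin m → ℝ} {z : ((Fin m × Fin n) →₀ ℕ) → ℝ}

lemma rowPoly_riesz_zero (hr : 0 < r)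
    (hrow : ∀ i, locZero z (rowPoly m n μ i) (r - 1))
    (hrow2 : ∀ i₁ i₂ : Fin m, ∀ j : Fin n,
      locZero z (rowPoly m n μ i₁ * X (i₂, j)) (r - 1))
    (i : Fin m) (α : (Fin m × Fin n) →₀ ℕ) (hα : mdeg α ≤ 2 * r - 1) :
    riesz z (rowPoly m n μ i * monomial α 1) = 0 := by
  rcases le_or_gt (mdeg α) (2 * (r - 1)) with h | h
  · obtain ⟨β, γ, rfl, hβ, hγ⟩ := split_two' α (r - 1) h
    have hz := hrow i β γ hβ hγ
    rwa [mul_assoc, monomial_mul, one_mul] at hz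
  · have hα1 : 1 ≤ mdeg α := by omega
    have hne : α ≠ 0 := by
      intro h0; rw [h0] at hα1; simp [mdeg] at hα1
    obtain ⟨q, hq⟩ := Finsupp.ne_iff.mp hne
    simp only [Finsupp.coe_zero, Pi.zero_apply] at hq
    have hle : Finsupp.single q 1 ≤ α := by
      rw [Finsupp.single_le_iff]; omega
    have hsum : Finsupp.single q 1 + (α - Finsupp.single q 1) = α := add_tsub_cancel_of_le hle
    have hd' : mdeg (α - Finsupp.single q 1) ≤ 2 * (r - 1) := by
      have h2 := mdeg_add' (Finsupp.single q 1) (α - Finsupp.single q 1)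
      rw [hsum, mdeg_single'] at h2; omega
    obtain ⟨β, γ, hbg, hβ, hγ⟩ := split_two' (α - Finsupp.single q 1) (r - 1) hd'
    have hz := hrow2 i q.1 q.2 β γ hβ hγ
    have hXq : (X (q.1, q.2) : MvPolynomial (Fin m × Fin n) ℝ)
        = monomial (Finsupp.single q 1) 1 := rfl
    have key : rowPoly m n μ i * X (q.1, q.2) * monomial β 1 * monomial γ 1
        = rowPoly m n μ i * monomial α 1 := by
      rw [hXq, mul_assoc, monomial_mul, mul_assoc, monomial_mul, one_mul, one_mul,
        ← hbg, hsum]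
    rwa [key] at hz

/-- The sum of all variables. -/
noncomputable def Spoly (m n : ℕ) : MvPolynomial (Fin m × Fin n) ℝ := ∑ q, X q

lemma Spoly_totalDegree : (Spoly m n).totalDegree ≤ 1 := by
  refine le_trans (totalDegree_finset_sum _ _) ?_
  exact Finset.sup_le fun q _ => by rw [totalDegree_X]

lemma Spoly_isHomogeneous : (Spoly m n).IsHomogeneous 1 :=
  MvPolynomial.IsHomogeneous.sum _ _ _ fun q _ => isHomogeneous_X _ _

lemma sum_rowPoly (hμ : ∑ i, μ i = 1) :
    (∑ i, rowPoly m n μ i) = Spoly m n - 1 := by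
  unfold rowPoly Spoly
  rw [Finset.sum_sub_distrib, ← Fintype.sum_prod_type, ← map_sum C, hμ, map_one]

lemma riesz_Spoly_mul (hr : 0 < r) (hμ : ∑ i, μ i = 1)
    (hrow : ∀ i, locZero z (rowPoly m n μ i) (r - 1))
    (hrow2 : ∀ i₁ i₂ : Fin m, ∀ j : Fin n,
      locZero z (rowPoly m n μ i₁ * X (i₂, j)) (r - 1))
    (g : MvPolynomial (Fin m × Fin n) ℝ) (hg : g.totalDegree ≤ 2 * r - 1) :
    riesz z (Spoly m n * g) = riesz z g := by
  have key : riesz z ((Spoly m n - 1) * g) = 0 := by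
    rw [← sum_rowPoly hμ, Finset.sum_mul, riesz_sum']
    refine Finset.sum_eq_zero fun i _ => ?_
    conv_lhs => rw [g.as_sum, Finset.mul_sum, riesz_sum']
    refine Finset.sum_eq_zero fun α hα => ?_
    have hmd : mdeg α ≤ 2 * r - 1 := le_trans (le_totalDegree hα) hg
    have : (monomial α) (coeff α g) = coeff α g • (monomial α 1) := by
      rw [smul_monomial, smul_eq_mul, mul_one]
    rw [this, mul_smul_comm, riesz_smul', rowPoly_riesz_zero hr hrow hrow2 i α hmd, mul_zero]
  have expand : (Spoly m n - 1) * g = Spoly m n * g - g := by ring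
  rw [expand, riesz_sub'] at key
  linarith

lemma riesz_Spoly_pow (hr : 0 < r) (hμ : ∑ i, μ i = 1)
    (hrow : ∀ i, locZero z (rowPoly m n μ i) (r - 1))
    (hrow2 : ∀ i₁ i₂ : Fin m, ∀ j : Fin n,
      locZero z (rowPoly m n μ i₁ * X (i₂, j)) (r - 1))
    (a : ℕ) (g : MvPolynomial (Fin m × Fin n) ℝ) (hg : g.totalDegree + a ≤ 2 * r) :
    riesz z (Spoly m n ^ a * g) = riesz z g := by
  induction a with
  | zero => rw [pow_zero, one_mul]
  | succ a ih =>
    have hdeg : (Spoly m n ^ a * g).totalDegree ≤ 2 * r - 1 := by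
      refine le_trans (totalDegree_mul _ _) ?_
      have h1 : (Spoly m n ^ a).totalDegree ≤ a :=
        le_trans (totalDegree_pow _ _)
          (le_trans (Nat.mul_le_mul_left a Spoly_totalDegree) (by omega))
      omega
    have e : Spoly m n ^ (a + 1) * g = Spoly m n * (Spoly m n ^ a * g) := by ring
    rw [e, riesz_Spoly_mul hr hμ hrow hrow2 _ hdeg, ih (by omega)]

end Main

/-- Under the marginal localizing equalities, the full truncated
localizing matrix `M_{r−d_I}(e_I z)` is PSD iff its principal submatrix indexed by
multi-indices of length exactly `r−d_I` (i.e. the quadratic form restricted to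
homogeneous polynomials of degree `r−d_I`) is PSD. -/
theorem stmt17 (m n r : ℕ) (hm : 0 < m) (hn : 0 < n) (hr : 0 < r)
    (μ : Fin m → ℝ) (ν : Fin n → ℝ) (hμ : IsProbVec μ) (hν : IsProbVec ν)
    (z : ((Fin m × Fin n) →₀ ℕ) → ℝ) (hz0 : z 0 = 1)
    (hrow : ∀ i, locZero z (rowPoly m n μ i) (r - 1))
    (hcol : ∀ j, locZero z (colPoly m n ν j) (r - 1))
    (hrow2 : ∀ i₁ i₂ : Fin m, ∀ j : Fin n,
      locZero z (rowPoly m n μ i₁ * X (i₂, j)) (r - 1))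
    (hcol2 : ∀ j₁ j₂ : Fin n, ∀ i : Fin m,
      locZero z (colPoly m n ν j₁ * X (i, j₂)) (r - 1))
    (I : Finset (Fin m × Fin n)) (hI : I.card ≤ 2 * r) :
    locPSD z (eI I) (r - (I.card + 1) / 2) ↔
      ∀ p : MvPolynomial (Fin m × Fin n) ℝ,
        p.IsHomogeneous (r - (I.card + 1) / 2) → 0 ≤ riesz z (eI I * p ^ 2) := by
  constructor
  · intro h p hp
    exact h p hp.totalDegree_le
  · intro h p hp
    set t := r - (I.card + 1) / 2 with ht
    let hc : ℕ → MvPolynomial (Fin m × Fin n) ℝ := fun k => homogeneousComponent k p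
    have hp' : p = ∑ k ∈ Finset.range (t + 1), hc k := by
      rw [← sum_homogeneousComponent p]
      have hsub : Finset.range (p.totalDegree + 1) ⊆ Finset.range (t + 1) :=
        Finset.range_subset_range.mpr (by omega)
      refine Finset.sum_subset hsub fun k _ hk => ?_
      simp only [Finset.mem_range, not_lt] at hk
      exact homogeneousComponent_eq_zero k p (by omega)
    set q : MvPolynomial (Fin m × Fin n) ℝ :=
      ∑ k ∈ Finset.range (t + 1), Spoly m n ^ (t - k) * hc k with hq
    have hqhom : q.IsHomogeneous t := by
      refine MvPolynomial.IsHomogeneous.sum _ _ _ fun k hk => ?_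
      have hk' : k ≤ t := by simp only [Finset.mem_range] at hk; omega
      have h1 : (Spoly m n ^ (t - k)).IsHomogeneous (t - k) := by
        simpa using Spoly_isHomogeneous.pow (t - k)
      have h2 : (hc k).IsHomogeneous k := homogeneousComponent_isHomogeneous k p
      have := h1.mul h2
      rwa [Nat.sub_add_cancel hk'] at this
    have heIdeg : (eI I).totalDegree ≤ I.card := by
      refine le_trans (totalDegree_finset_prod _ _) ?_
      simp [totalDegree_X]
    have hcdeg : ∀ k, (hc k).totalDegree ≤ k := fun k =>
      (homogeneousComponent_isHomogeneous k p).totalDegree_le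
    have key : ∀ k ∈ Finset.range (t + 1), ∀ l ∈ Finset.range (t + 1),
        riesz z (Spoly m n ^ ((t - k) + (t - l)) * (eI I * (hc k * hc l)))
          = riesz z (eI I * (hc k * hc l)) := by
      intro k hk l hl
      simp only [Finset.mem_range] at hk hl
      refine riesz_Spoly_pow hr hμ.2 hrow hrow2 _ _ ?_
      have d1 : (eI I * (hc k * hc l)).totalDegree ≤ I.card + (k + l) := by
        refine le_trans (totalDegree_mul _ _) ?_
        have := totalDegree_mul (hc k) (hc l)
        have := hcdeg k
        have := hcdeg l
        omega
      have harith : I.card + 2 * t ≤ 2 * r := by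
        have h2 : ∀ c rr : ℕ, c ≤ 2 * rr → c + 2 * (rr - (c + 1) / 2) ≤ 2 * rr :=
          fun c rr h => by omega
        have h3 := h2 I.card r hI
        rwa [← ht] at h3
      omega
    have e1 : eI I * q ^ 2 = ∑ k ∈ Finset.range (t + 1), ∑ l ∈ Finset.range (t + 1),
        Spoly m n ^ ((t - k) + (t - l)) * (eI I * (hc k * hc l)) := by
      rw [sq, hq, Finset.sum_mul_sum, Finset.mul_sum]
      refine Finset.sum_congr rfl fun k _ => ?_
      rw [Finset.mul_sum]
      refine Finset.sum_congr rfl fun l _ => ?_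
      rw [pow_add]; ring
    have e2 : eI I * p ^ 2 = ∑ k ∈ Finset.range (t + 1), ∑ l ∈ Finset.range (t + 1),
        eI I * (hc k * hc l) := by
      conv_lhs => rw [sq, hp']
      rw [Finset.sum_mul_sum, Finset.mul_sum]
      refine Finset.sum_congr rfl fun k _ => ?_
      rw [Finset.mul_sum]
    have main : riesz z (eI I * p ^ 2) = riesz z (eI I * q ^ 2) := by
      rw [e1, e2, riesz_sum', riesz_sum']
      refine Finset.sum_congr rfl fun k hk => ?_
      rw [riesz_sum', riesz_sum']
      exact (Finset.sum_congr rfl fun l hl => (key k hk l hl).symm)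
    rw [main]
    exact h q hqhom
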